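/- Under the uniform distribution (θ = 1), for 1 ≤ r ≤ s and m ≥ k_r + 1, the proportion of permutations of S_m using at most r−1 selections under the (k₁,…,k_r)-strategy equals (1/m)·(k_r + k_{r−1}·Σ_{i=k_r}^{m−1} 1/i + k_{r−2}·Σ_{i₁=k_r}^{m−1} (1/i₁) Σ_{i₂=k_{r−1}}^{i₁−1} (1/i₂) + … + k₁·Σ_{i₁=k_r}^{m−1}(1/i₁)Σ_{i₂=k_{r−1}}^{i₁−1}(1/i₂)⋯Σ_{i_{r−1}=k₂}^{i_{r−2}−1}(1/i_{r−1})). -/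

import Mathlib

open Finset

/-- Number of inversions (Kendall tau statistic) of a permutation. -/
def inversions {N : ℕ} (π : Equiv.Perm (Fin N)) : ℕ :=
  (Finset.univ.filter (fun x : Fin N × Fin N => x.1 < x.2 ∧ π x.2 < π x.1)).card

/-- `P_k(θ) = 1 + θ + … + θ^(k-1)`. -/
def mallowsP (θ : ℝ) (k : ℕ) : ℝ := ∑ i ∈ Finset.range k, θ ^ i

/-- `(P_k)! = P_k · P_(k-1) · … · P_1`. -/
def mallowsPFact (θ : ℝ) (k : ℕ) : ℝ := ∏ j ∈ Finset.range k, mallowsP θ (j + 1)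

/-- Positions (0-indexed) selected by the multi-threshold strategy: for each
threshold `k` in the list, the next selection is at the first position `p` with
`p ≥ k` (i.e. the first `k` candidates are rejected), `p ≥ lo` (after the previous
selection), and `p` a left-to-right maximum. -/
def selList {N : ℕ} (π : Equiv.Perm (Fin N)) : List ℕ → ℕ → List (Fin N)
  | [], _ => []
  | k :: ks, lo =>
    let s : Finset (Fin N) := Finset.univ.filter
      (fun p => max k lo ≤ (p : ℕ) ∧ ∀ q : Fin N, q < p → π q < π p)
    if h : s.Nonempty then s.min' h :: selList π ks ((s.min' h : ℕ) + 1) else []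

/-- The strategy wins on `π` if the position holding the largest value is selected. -/
def winnable {N : ℕ} (π : Equiv.Perm (Fin N)) (ks : List ℕ) : Prop :=
  ∃ p ∈ selList π ks 0, ∀ q : Fin N, π q ≤ π p

instance {N : ℕ} (π : Equiv.Perm (Fin N)) (ks : List ℕ) : Decidable (winnable π ks) :=
  inferInstanceAs (Decidable (∃ p ∈ selList π ks 0, ∀ q : Fin N, π q ≤ π p))

/-- `W(N, k₁, …, k_s) = Σ_(winnable π ∈ S_N) θ^(c(π))`. -/
def winW (θ : ℝ) (N : ℕ) (ks : List ℕ) : ℝ :=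
  ∑ π : Equiv.Perm (Fin N), if winnable π ks then θ ^ inversions π else 0

/-- `T_{≤j}(m, k₁, …, k_r)`: weight of permutations of `S_m` on which the strategy
makes at most `j` selections (with `j : ℤ`, so `T_{≤-1} = 0`). -/
def Tle (θ : ℝ) (m : ℕ) (ks : List ℕ) (j : ℤ) : ℝ :=
  ∑ π : Equiv.Perm (Fin m),
    if ((selList π ks 0).length : ℤ) ≤ j then θ ^ inversions π else 0

/-- `T_j(m, k₁, …, k_r)`: weight of permutations of `S_m` on which the strategy
makes exactly `j` selections. -/
def Texact (θ : ℝ) (m : ℕ) (ks : List ℕ) (j : ℕ) : ℝ :=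
  ∑ π : Equiv.Perm (Fin m),
    if (selList π ks 0).length = j then θ ^ inversions π else 0

/-- Nested harmonic sums: `nestedSum [b₁, …, b_j] u =
Σ_{i₁ = b₁}^{u-1} (1/i₁) Σ_{i₂ = b₂}^{i₁-1} (1/i₂) ⋯ Σ_{i_j = b_j}^{i_{j-1}-1} (1/i_j)`. -/
noncomputable def nestedSum : List ℕ → ℕ → ℝ
  | [], _ => 1
  | b :: bs, u => ∑ i ∈ Finset.Ico b u, (1 / (i : ℝ)) * nestedSum bs i

namespace Stmt12aux

/-- set-level greedy selection count -/
def gList (R : Finset ℕ) : List ℕ → ℕ → ℕ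
  | [], _ => 0
  | k :: ks, lo =>
    if h : (R.filter (fun p => max k lo ≤ p)).Nonempty
    then gList R ks ((R.filter (fun p => max k lo ≤ p)).min' h + 1) + 1
    else 0

lemma gl_le (R : Finset ℕ) : ∀ (ks : List ℕ) (lo : ℕ), gList R ks lo ≤ ks.length
  | [], lo => le_refl _
  | k :: ks, lo => by
    rw [gList]
    split
    · simpa using gl_le R ks _
    · simp

lemma gl_stuck (R : Finset ℕ) (ks : List ℕ) (lo : ℕ) (h : ∀ x ∈ R, x < lo) :
    gList R ks lo = 0 := by
  cases ks with
  | nil => rfl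
  | cons k ks =>
    have hem : (R.filter (fun p => max k lo ≤ p)) = ∅ := by
      rw [Finset.filter_eq_empty_iff]
      intro x hx hc
      exact absurd (le_trans (le_max_right _ _) hc) (not_le.mpr (h x hx))
    rw [gList, dif_neg (by rw [hem]; exact Finset.not_nonempty_empty)]

lemma gl_take (R : Finset ℕ) : ∀ (ks : List ℕ) (t : ℕ) (lo : ℕ),
    gList R (ks.take t) lo = min t (gList R ks lo)
  | [], t, lo => by simp [gList]
  | k :: ks, 0, lo => by simp [gList]
  | k :: ks, t + 1, lo => by
    rw [List.take_succ_cons, gList, gList]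
    by_cases h : (R.filter (fun p => max k lo ≤ p)).Nonempty
    · rw [dif_pos h, dif_pos h, gl_take R ks t]
      omega
    · rw [dif_neg h, dif_neg h]
      simp

lemma gl_insert (R : Finset ℕ) (n : ℕ) (hR : ∀ x ∈ R, x < n) :
    ∀ (ks : List ℕ) (lo : ℕ), (∀ k ∈ ks, k ≤ n) → lo ≤ n →
    gList (insert n R) ks lo = min ks.length (gList R ks lo + 1)
  | [], lo, _, _ => by simp [gList]
  | k :: ks, lo, hks, hlo => by
    have hkn : k ≤ n := hks k List.mem_cons_self
    have hfil : (insert n R).filter (fun p => max k lo ≤ p)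
        = insert n (R.filter (fun p => max k lo ≤ p)) := by
      rw [Finset.filter_insert, if_pos (by simp [hkn, hlo])]
    have hne : ((insert n R).filter (fun p => max k lo ≤ p)).Nonempty := by
      rw [hfil]; exact Finset.insert_nonempty _ _
    rw [gList, dif_pos hne]
    by_cases h : (R.filter (fun p => max k lo ≤ p)).Nonempty
    · have hmlt : (R.filter (fun p => max k lo ≤ p)).min' h < n :=
        hR _ (Finset.mem_of_mem_filter _ (Finset.min'_mem _ h))
      have hmin : ((insert n R).filter (fun p => max k lo ≤ p)).min' hne
          = (R.filter (fun p => max k lo ≤ p)).min' h := by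
        apply le_antisymm
        · exact Finset.min'_le _ _ (by rw [hfil]; exact Finset.mem_insert_of_mem (Finset.min'_mem _ h))
        · apply Finset.le_min'
          intro y hy
          rw [hfil, Finset.mem_insert] at hy
          rcases hy with rfl | hy
          · omega
          · exact Finset.min'_le _ _ hy
      rw [hmin]
      rw [gl_insert R n hR ks _ (fun x hx => hks x (List.mem_cons_of_mem _ hx)) (by omega)]
      rw [gList, dif_pos h]
      simp only [List.length_cons]
      omega
    · have hmin : ((insert n R).filter (fun p => max k lo ≤ p)).min' hne = n := by
        apply le_antisymm
        · apply Finset.min'_le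
          rw [hfil]
          exact Finset.mem_insert_self _ _
        · apply Finset.le_min'
          intro y hy
          rw [hfil, Finset.mem_insert] at hy
          rcases hy with rfl | hy
          · exact le_refl _
          · exact absurd ⟨y, hy⟩ h
      rw [hmin]
      have h0 : gList (insert n R) ks (n + 1) = 0 := by
        apply gl_stuck
        intro x hx
        rcases Finset.mem_insert.mp hx with h1 | h1
        · omega
        · have := hR x h1; omega
      rw [h0, gList, dif_neg h]
      simp only [List.length_cons]
      omega

lemma gl_full_exists (R : Finset ℕ) : ∀ (ks : List ℕ) (hne : ks ≠ []) (lo : ℕ),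
    gList R ks lo = ks.length → ∃ x ∈ R, ks.getLast hne ≤ x
  | [], hne, _, _ => absurd rfl hne
  | k :: ks, hne, lo, hfull => by
    rw [gList] at hfull
    by_cases h : (R.filter (fun p => max k lo ≤ p)).Nonempty
    · rw [dif_pos h] at hfull
      cases ks with
      | nil =>
        refine ⟨(R.filter (fun p => max k lo ≤ p)).min' h,
          Finset.mem_of_mem_filter _ (Finset.min'_mem _ h), ?_⟩
        have hmem := (Finset.mem_filter.mp (Finset.min'_mem _ h)).2
        simp only [List.getLast_singleton]
        exact le_trans (le_max_left _ _) hmem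
      | cons k' ks' =>
        have := gl_full_exists R (k' :: ks') (by simp) _ (by simpa using hfull)
        simpa [List.getLast_cons] using this
    · rw [dif_neg h] at hfull
      simp at hfull


def recF {N : ℕ} (π : Equiv.Perm (Fin N)) : Finset ℕ :=
  (Finset.univ.filter (fun p : Fin N => ∀ q : Fin N, q < p → π q < π p)).image Fin.val

lemma min'_image_val {N : ℕ} (s : Finset (Fin N)) (h : s.Nonempty) :
    (s.image Fin.val).min' (h.image _) = (s.min' h : ℕ) := by
  apply le_antisymm
  · exact Finset.min'_le _ _ (Finset.mem_image_of_mem _ (Finset.min'_mem _ h))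
  · apply Finset.le_min'
    intro y hy
    obtain ⟨x, hx, rfl⟩ := Finset.mem_image.mp hy
    exact Finset.min'_le _ _ hx

lemma filter_recF {N : ℕ} (π : Equiv.Perm (Fin N)) (b : ℕ) :
    (recF π).filter (fun p => b ≤ p)
      = (Finset.univ.filter (fun p : Fin N => b ≤ (p : ℕ) ∧ ∀ q : Fin N, q < p → π q < π p)).image Fin.val := by
  rw [recF, Finset.filter_image, Finset.filter_filter]
  congr 1
  ext p
  simp [and_comm]

lemma selList_length {N : ℕ} (π : Equiv.Perm (Fin N)) :
    ∀ (ks : List ℕ) (lo : ℕ), (selList π ks lo).length = gList (recF π) ks lo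
  | [], lo => rfl
  | k :: ks, lo => by
    rw [selList, gList]
    have hfil := filter_recF π (max k lo)
    set sF : Finset (Fin N) := Finset.univ.filter
      (fun p => max k lo ≤ (p : ℕ) ∧ ∀ q : Fin N, q < p → π q < π p) with hsF
    by_cases h : sF.Nonempty
    · rw [dif_pos h]
      have hne : ((recF π).filter (fun p => max k lo ≤ p)).Nonempty := by
        rw [hfil]; exact h.image _
      rw [dif_pos hne]
      have hm : ((recF π).filter (fun p => max k lo ≤ p)).min' hne = (sF.min' h : ℕ) := by
        apply le_antisymm
        · exact Finset.min'_le _ _ (by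
            rw [hfil]; exact Finset.mem_image_of_mem _ (Finset.min'_mem _ h))
        · apply Finset.le_min'
          intro y hy
          rw [hfil] at hy
          obtain ⟨x, hx, rfl⟩ := Finset.mem_image.mp hy
          exact_mod_cast Finset.min'_le _ _ hx
      rw [List.length_cons, hm, selList_length π ks _]
    · have hemp : ((recF π).filter (fun p => max k lo ≤ p)) = ∅ := by
        rw [hfil, Finset.not_nonempty_iff_eq_empty.mp h, Finset.image_empty]
      rw [dif_neg h, dif_neg (by rw [hemp]; exact Finset.not_nonempty_empty)]
      rfl


/-- insert value v at the last position -/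
def insLast {n : ℕ} (v : Fin (n + 1)) (σ : Equiv.Perm (Fin n)) : Equiv.Perm (Fin (n + 1)) :=
  (finSuccEquivLast.trans ((Equiv.optionCongr σ).trans (finSuccEquiv' v).symm))

lemma insLast_last {n : ℕ} (v : Fin (n + 1)) (σ : Equiv.Perm (Fin n)) :
    insLast v σ (Fin.last n) = v := by
  simp [insLast, finSuccEquivLast_last]

lemma insLast_castSucc {n : ℕ} (v : Fin (n + 1)) (σ : Equiv.Perm (Fin n)) (i : Fin n) :
    insLast v σ (Fin.castSucc i) = v.succAbove (σ i) := by
  simp [insLast, finSuccEquivLast_castSucc, finSuccEquiv'_symm_some]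

lemma insLast_bijective {n : ℕ} :
    Function.Bijective (fun x : Fin (n + 1) × Equiv.Perm (Fin n) => insLast x.1 x.2) := by
  rw [Fintype.bijective_iff_injective_and_card]
  constructor
  · rintro ⟨v, σ⟩ ⟨w, τ⟩ h
    simp only at h
    have hv : v = w := by
      rw [← insLast_last v σ, ← insLast_last w τ, h]
    subst hv
    have hστ : σ = τ := Equiv.ext fun i => Fin.succAbove_right_injective (p := v) (by
      have := congrArg (fun π : Equiv.Perm (Fin (n+1)) => π (Fin.castSucc i)) h
      simpa only [insLast_castSucc] using this)
    rw [hστ]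
  · simp [Fintype.card_perm, Nat.factorial_succ]

lemma recF_insLast {n : ℕ} (v : Fin (n + 1)) (σ : Equiv.Perm (Fin n)) :
    recF (insLast v σ) = if v = Fin.last n then insert n (recF σ) else recF σ := by
  ext p
  simp only [recF, Finset.mem_image, Finset.mem_filter, Finset.mem_univ, true_and]
  constructor
  · rintro ⟨q, hq, rfl⟩
    rcases Fin.eq_castSucc_or_eq_last q with ⟨i, rfl⟩ | rfl
    · -- q = castSucc i
      have hmem : ((Fin.castSucc i : Fin (n+1)) : ℕ) ∈ recF σ := by
        simp only [recF, Finset.mem_image, Finset.mem_filter, Finset.mem_univ, true_and]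
        refine ⟨i, fun r hr => ?_, by simp⟩
        have := hq (Fin.castSucc r) (by simpa [Fin.castSucc_lt_castSucc_iff] using hr)
        rw [insLast_castSucc, insLast_castSucc] at this
        exact (Fin.succAbove_lt_succAbove_iff).mp this
      split
      · exact Finset.mem_insert_of_mem hmem
      · exact hmem
    · -- q = last
      have hv : v = Fin.last n := by
        by_contra hvne
        obtain ⟨z, hz⟩ := Fin.exists_succAbove_eq (Ne.symm hvne : Fin.last n ≠ v)
        obtain ⟨i, hi⟩ := σ.surjective z
        have hlt : insLast v σ (Fin.castSucc i) < insLast v σ (Fin.last n) :=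
          hq _ (Fin.castSucc_lt_last i)
        rw [insLast_castSucc, insLast_last, hi, hz] at hlt
        exact absurd hlt (not_lt.mpr (Fin.le_last v))
      rw [if_pos hv]
      exact Finset.mem_insert_self _ _
  · intro hp
    by_cases hv : v = Fin.last n
    · rw [if_pos hv] at hp
      rcases Finset.mem_insert.mp hp with h | hp
      · refine ⟨Fin.last n, fun r hr => ?_, by simp [h]⟩
        rw [insLast_last, hv]
        rcases Fin.eq_castSucc_or_eq_last r with ⟨i, rfl⟩ | rfl
        · rw [insLast_castSucc]
          simpa [Fin.succAbove_last] using (Fin.castSucc_lt_last (σ i))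
        · exact absurd hr (lt_irrefl _)
      · obtain ⟨i, hi, rfl⟩ := by
          simpa only [recF, Finset.mem_image, Finset.mem_filter, Finset.mem_univ, true_and] using hp
        refine ⟨Fin.castSucc i, fun r hr => ?_, by simp⟩
        rcases Fin.eq_castSucc_or_eq_last r with ⟨j, rfl⟩ | rfl
        · rw [insLast_castSucc, insLast_castSucc, Fin.succAbove_lt_succAbove_iff]
          exact hi j (by simpa [Fin.castSucc_lt_castSucc_iff] using hr)
        · exact absurd hr (not_lt.mpr (Fin.castSucc_lt_last i).le)
    · rw [if_neg hv] at hp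
      obtain ⟨i, hi, rfl⟩ := by
        simpa only [recF, Finset.mem_image, Finset.mem_filter, Finset.mem_univ, true_and] using hp
      refine ⟨Fin.castSucc i, fun r hr => ?_, by simp⟩
      rcases Fin.eq_castSucc_or_eq_last r with ⟨j, rfl⟩ | rfl
      · rw [insLast_castSucc, insLast_castSucc, Fin.succAbove_lt_succAbove_iff]
        exact hi j (by simpa [Fin.castSucc_lt_castSucc_iff] using hr)
      · exact absurd hr (not_lt.mpr (Fin.castSucc_lt_last i).le)

lemma sum_records (n : ℕ) (F : Finset ℕ → ℝ) :
    ∑ π : Equiv.Perm (Fin n), F (recF π)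
      = ∑ R ∈ (Finset.range n).powerset, (∏ p ∈ Finset.range n \ R, (p : ℝ)) * F R := by
  induction n generalizing F with
  | zero =>
    rw [Finset.range_zero, Finset.powerset_empty, Finset.sum_singleton]
    have h1 : ∀ π : Equiv.Perm (Fin 0), recF π = ∅ := by
      intro π; simp [recF]
    rw [Finset.sum_congr rfl (fun π _ => by rw [h1 π])]
    simp
  | succ n ih =>
    have hb := @insLast_bijective n
    rw [← Fintype.sum_bijective _ hb (fun x => F (recF (insLast x.1 x.2))) _ (fun x => rfl)]
    rw [Fintype.sum_prod_type_right]
    have hstep : ∀ σ : Equiv.Perm (Fin n),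
        (∑ v : Fin (n + 1), F (recF (insLast v σ)))
          = F (insert n (recF σ)) + n * F (recF σ) := by
      intro σ
      have h2 : ∀ v : Fin (n + 1), F (recF (insLast v σ))
          = if v = Fin.last n then F (insert n (recF σ)) else F (recF σ) := by
        intro v
        rw [recF_insLast]
        split <;> rfl
      rw [Finset.sum_congr rfl (fun v _ => h2 v)]
      rw [← Finset.add_sum_erase _ _ (Finset.mem_univ (Fin.last n)), if_pos rfl]
      congr 1
      rw [Finset.sum_congr rfl (fun v hv => if_neg (Finset.ne_of_mem_erase hv))]
      rw [Finset.sum_const, Finset.card_erase_of_mem (Finset.mem_univ _), Finset.card_univ,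
        Fintype.card_fin]
      simp [nsmul_eq_mul]
    rw [Finset.sum_congr rfl (fun σ _ => hstep σ)]
    rw [ih (fun R => F (insert n R) + (n : ℝ) * F R)]
    rw [Finset.range_add_one, Finset.sum_powerset_insert (by simp)]
    have e1 : ∀ R ∈ (Finset.range n).powerset,
        (∏ p ∈ insert n (Finset.range n) \ R, (p : ℝ)) * F R
          = (∏ p ∈ Finset.range n \ R, (p : ℝ)) * ((n : ℝ) * F R) := by
      intro R hR
      have hnR : n ∉ R := fun h => absurd (Finset.mem_powerset.mp hR h) (by simp)
      rw [Finset.insert_sdiff_of_notMem _ hnR, Finset.prod_insert (by simp)]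
      ring
    have e2 : ∀ R ∈ (Finset.range n).powerset,
        (∏ p ∈ insert n (Finset.range n) \ insert n R, (p : ℝ)) * F (insert n R)
          = (∏ p ∈ Finset.range n \ R, (p : ℝ)) * F (insert n R) := by
      intro R hR
      have hnR : n ∉ R := fun h => absurd (Finset.mem_powerset.mp hR h) (by simp)
      have hset : insert n (Finset.range n) \ insert n R = Finset.range n \ R := by
        ext x
        simp only [Finset.mem_sdiff, Finset.mem_insert, Finset.mem_range]
        constructor
        · rintro ⟨h1 | h1, h2⟩
          · exact absurd (Or.inl h1) h2
          · exact ⟨h1, fun h => h2 (Or.inr h)⟩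
        · rintro ⟨h1, h2⟩
          refine ⟨Or.inr h1, ?_⟩
          rintro (rfl | h)
          · exact absurd h1 (lt_irrefl _)
          · exact h2 h
      rw [hset]
    rw [Finset.sum_congr rfl e1, Finset.sum_congr rfl e2, ← Finset.sum_add_distrib]
    apply Finset.sum_congr rfl
    intro R hR
    ring

noncomputable def Fval (K : List ℕ) (m : ℕ) : ℝ :=
  ∑ j ∈ Finset.range K.length, (K.reverse.getD j 0 : ℝ) * nestedSum (K.reverse.take j) m

lemma reverse_eq (K : List ℕ) (hne : K ≠ []) :
    K.reverse = K.getLast hne :: K.dropLast.reverse := by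
  conv_lhs => rw [← List.dropLast_append_getLast hne]
  rw [List.reverse_append]
  rfl

lemma Fval_base (K : List ℕ) (hne : K ≠ []) : Fval K (K.getLast hne) = K.getLast hne := by
  rw [Fval]
  have hlen : K.length = K.dropLast.length + 1 := by
    rw [List.length_dropLast]
    have := List.length_pos_iff.mpr hne
    omega
  rw [hlen, Finset.sum_range_succ']
  have h0 : ((K.reverse.getD 0 0 : ℕ) : ℝ) * nestedSum (K.reverse.take 0) (K.getLast hne)
      = K.getLast hne := by
    rw [reverse_eq K hne]
    simp [nestedSum]
  rw [h0]
  have hz : ∀ j ∈ Finset.range K.dropLast.length,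
      ((K.reverse.getD (j+1) 0 : ℕ) : ℝ) * nestedSum (K.reverse.take (j+1)) (K.getLast hne) = 0 := by
    intro j hj
    rw [reverse_eq K hne, List.take_succ_cons, nestedSum]
    simp
  rw [Finset.sum_congr rfl hz]
  simp

lemma Fval_step (K : List ℕ) (hne : K ≠ []) (m : ℕ) (hm : K.getLast hne ≤ m) :
    Fval K (m + 1) = Fval K m + (1 / (m : ℝ)) * Fval K.dropLast m := by
  rw [Fval, Fval, Fval]
  have hlen : K.length = K.dropLast.length + 1 := by
    rw [List.length_dropLast]; have := List.length_pos_iff.mpr hne; omega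
  rw [hlen, Finset.sum_range_succ', Finset.sum_range_succ']
  have hrev := reverse_eq K hne
  have h0 : ∀ u : ℕ, ((K.reverse.getD 0 0 : ℕ) : ℝ) * nestedSum (K.reverse.take 0) u
      = K.getLast hne := by
    intro u; rw [hrev]; simp [nestedSum]
  rw [h0, h0]
  have hterm : ∀ j, ((K.reverse.getD (j+1) 0 : ℕ) : ℝ) = (K.dropLast.reverse.getD j 0 : ℝ) := by
    intro j; rw [hrev]; rfl
  have htake : ∀ j, K.reverse.take (j+1) = K.getLast hne :: K.dropLast.reverse.take j := by
    intro j; rw [hrev, List.take_succ_cons]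
  have hnest : ∀ j, nestedSum (K.reverse.take (j+1)) (m+1)
      = nestedSum (K.reverse.take (j+1)) m
        + (1 / (m : ℝ)) * nestedSum (K.dropLast.reverse.take j) m := by
    intro j
    rw [htake, nestedSum, nestedSum, Finset.sum_Ico_succ_top hm]
  have expand : ∀ j ∈ Finset.range K.dropLast.length,
      ((K.reverse.getD (j+1) 0 : ℕ) : ℝ) * nestedSum (K.reverse.take (j+1)) (m+1)
        = ((K.reverse.getD (j+1) 0 : ℕ) : ℝ) * nestedSum (K.reverse.take (j+1)) m
          + (1 / (m : ℝ)) * (((K.dropLast.reverse.getD j 0 : ℕ) : ℝ)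
              * nestedSum (K.dropLast.reverse.take j) m) := by
    intro j hj
    rw [hnest j, hterm j]
    ring
  rw [Finset.sum_congr rfl expand, Finset.sum_add_distrib, ← Finset.mul_sum]
  ring



lemma sorted_le_getLast : ∀ (K : List ℕ) (hne : K ≠ []), K.Pairwise (· ≤ ·) →
    ∀ x ∈ K, x ≤ K.getLast hne
  | [], hne, _, _, hx => absurd rfl hne
  | a :: t, hne, hsort, x, hx => by
    rcases List.pairwise_cons.mp hsort with ⟨ha, hts⟩
    cases t with
    | nil => simpa using le_of_eq (List.mem_singleton.mp hx)
    | cons b t' =>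
      rw [List.getLast_cons (by simp : b :: t' ≠ [])]
      rcases List.mem_cons.mp hx with rfl | hx'
      · exact ha _ (List.getLast_mem _)
      · exact sorted_le_getLast (b :: t') (by simp) hts x hx'

lemma main_arith : ∀ (L : ℕ) (K : List ℕ) (hne : K ≠ []), K.length ≤ L →
    K.Pairwise (· ≤ ·) → (∀ x ∈ K, 1 ≤ x) → ∀ m, K.getLast hne ≤ m →
    (∑ R ∈ (Finset.range m).powerset, (∏ p ∈ Finset.range m \ R, (p : ℝ)) *
        (if (gList R K 0 : ℤ) ≤ (K.length : ℤ) - 1 then (1 : ℝ) else 0))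
      = ((m - 1).factorial : ℝ) * Fval K m := by
  intro L
  induction L with
  | zero =>
    intro K hne hL
    exact absurd hL (by have := List.length_pos_iff.mpr hne; omega)
  | succ L ihL =>
    intro K hne hL hsort hpos m hm
    induction m, hm using Nat.le_induction with
    | base =>
      -- m = K.getLast hne
      set g := K.getLast hne with hg
      have hg1 : 1 ≤ g := hpos _ (List.getLast_mem hne)
      have hone : ∀ R ∈ (Finset.range g).powerset,
          (if (gList R K 0 : ℤ) ≤ (K.length : ℤ) - 1 then (1 : ℝ) else 0) = 1 := by
        intro R hR
        rw [if_pos]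
        have hle := gl_le R K 0
        have hne2 : gList R K 0 ≠ K.length := by
          intro hfull
          obtain ⟨x, hxR, hgx⟩ := gl_full_exists R K hne 0 hfull
          have := Finset.mem_range.mp (Finset.mem_powerset.mp hR hxR)
          omega
        have hlen := List.length_pos_iff.mpr hne
        omega
      rw [Finset.sum_congr rfl (fun R hR => by rw [hone R hR])]
      have htot : (∑ R ∈ (Finset.range g).powerset,
          (∏ p ∈ Finset.range g \ R, (p : ℝ)) * 1) = (g.factorial : ℝ) := by
        rw [← sum_records g (fun _ => (1 : ℝ))]
        simp [Finset.card_univ, Fintype.card_perm]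
      rw [htot, Fval_base K hne]
      have hgf : g.factorial = (g - 1).factorial * g := by
        conv_lhs => rw [show g = (g - 1) + 1 by omega]
        rw [Nat.factorial_succ, show g - 1 + 1 = g by omega]
        ring
      rw [hgf]
      push_cast
      ring
    | succ m hm' ihm =>
      have hm1 : 1 ≤ m := le_trans (hpos _ (List.getLast_mem hne)) hm'
      have hkm : ∀ k ∈ K, k ≤ m := fun k hk =>
        le_trans (sorted_le_getLast K hne hsort k hk) hm'
      rw [Finset.range_add_one, Finset.sum_powerset_insert (by simp)]
      -- first sum
      have e1 : ∀ R ∈ (Finset.range m).powerset,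
          (∏ p ∈ insert m (Finset.range m) \ R, (p : ℝ)) *
            (if (gList R K 0 : ℤ) ≤ (K.length : ℤ) - 1 then (1 : ℝ) else 0)
          = (m : ℝ) * ((∏ p ∈ Finset.range m \ R, (p : ℝ)) *
            (if (gList R K 0 : ℤ) ≤ (K.length : ℤ) - 1 then (1 : ℝ) else 0)) := by
        intro R hR
        have hnR : m ∉ R := fun h => absurd (Finset.mem_powerset.mp hR h) (by simp)
        rw [Finset.insert_sdiff_of_notMem _ hnR, Finset.prod_insert (by simp)]
        ring
      -- second sum
      have e2 : ∀ R ∈ (Finset.range m).powerset,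
          (∏ p ∈ insert m (Finset.range m) \ insert m R, (p : ℝ)) *
            (if (gList (insert m R) K 0 : ℤ) ≤ (K.length : ℤ) - 1 then (1 : ℝ) else 0)
          = (∏ p ∈ Finset.range m \ R, (p : ℝ)) *
            (if (gList R K.dropLast 0 : ℤ) ≤ (K.dropLast.length : ℤ) - 1 then (1 : ℝ) else 0) := by
        intro R hR
        have hnR : m ∉ R := fun h => absurd (Finset.mem_powerset.mp hR h) (by simp)
        have hset : insert m (Finset.range m) \ insert m R = Finset.range m \ R := by
          ext x
          simp only [Finset.mem_sdiff, Finset.mem_insert, Finset.mem_range]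
          constructor
          · rintro ⟨h1 | h1, h2⟩
            · exact absurd (Or.inl h1) h2
            · exact ⟨h1, fun h => h2 (Or.inr h)⟩
          · rintro ⟨h1, h2⟩
            refine ⟨Or.inr h1, ?_⟩
            rintro (rfl | h)
            · exact absurd h1 (lt_irrefl _)
            · exact h2 h
        rw [hset]
        congr 1
        have hgi : gList (insert m R) K 0 = min K.length (gList R K 0 + 1) :=
          gl_insert R m (fun x hx => Finset.mem_range.mp (Finset.mem_powerset.mp hR hx))
            K 0 hkm (by omega)
        have hgd : gList R K.dropLast 0 = min (K.length - 1) (gList R K 0) := by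
          rw [List.dropLast_eq_take, gl_take]
        have hdl : K.dropLast.length = K.length - 1 := List.length_dropLast (xs := K)
        rw [hgi, hgd, hdl]
        have hlen := List.length_pos_iff.mpr hne
        have hiff : (((min K.length (gList R K 0 + 1) : ℕ) : ℤ) ≤ (K.length : ℤ) - 1) ↔
            (((min (K.length - 1) (gList R K 0) : ℕ) : ℤ) ≤ ((K.length - 1 : ℕ) : ℤ) - 1) := by
          omega
        rw [if_congr hiff rfl rfl]
      rw [Finset.sum_congr rfl e1, Finset.sum_congr rfl e2, ← Finset.mul_sum]
      rw [ihm]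
      -- second sum evaluation
      have hS2 : (∑ R ∈ (Finset.range m).powerset, (∏ p ∈ Finset.range m \ R, (p : ℝ)) *
          (if (gList R K.dropLast 0 : ℤ) ≤ (K.dropLast.length : ℤ) - 1 then (1 : ℝ) else 0))
          = ((m - 1).factorial : ℝ) * Fval K.dropLast m := by
        by_cases hdne : K.dropLast = []
        · rw [hdne]
          have : ∀ R ∈ (Finset.range m).powerset,
              (∏ p ∈ Finset.range m \ R, (p : ℝ)) *
                (if (gList R ([] : List ℕ) 0 : ℤ) ≤ (([] : List ℕ).length : ℤ) - 1
                  then (1 : ℝ) else 0) = 0 := by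
            intro R hR
            rw [if_neg (by simp [gList])]
            ring
          rw [Finset.sum_congr rfl this]
          simp [Fval]
        · have hdlen : K.dropLast.length ≤ L := by
            have := List.length_dropLast (xs := K)
            have hlen := List.length_pos_iff.mpr hne
            omega
          have hdsort : K.dropLast.Pairwise (· ≤ ·) :=
            List.Pairwise.sublist (List.dropLast_sublist K) hsort
          have hdpos : ∀ x ∈ K.dropLast, 1 ≤ x := fun x hx =>
            hpos x ((List.dropLast_sublist K).subset hx)
          exact ihL K.dropLast hdne hdlen hdsort hdpos m
            (le_trans (le_trans (sorted_le_getLast K hne hsort _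
              ((List.dropLast_sublist K).subset (List.getLast_mem hdne))) hm') (le_refl m))
      rw [hS2]
      -- RHS
      have hstep := Fval_step K hne m hm'
      rw [show m + 1 - 1 = m by omega, hstep]
      have hfacn : m.factorial = m * (m - 1).factorial := by
        conv_lhs => rw [show m = (m - 1) + 1 by omega]
        rw [Nat.factorial_succ, show m - 1 + 1 = m by omega]
      have hfac : (m.factorial : ℝ) = (m : ℝ) * (((m - 1).factorial : ℕ) : ℝ) := by
        rw [hfacn]; push_cast; ring
      rw [hfac]
      have hmne : (m : ℝ) ≠ 0 := by positivity
      field_simp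

lemma Tle_eq (m : ℕ) (K : List ℕ) (j : ℤ) :
    Tle 1 m K j = ∑ R ∈ (Finset.range m).powerset, (∏ p ∈ Finset.range m \ R, (p : ℝ)) *
      (if (gList R K 0 : ℤ) ≤ j then (1 : ℝ) else 0) := by
  rw [Tle, ← sum_records m (fun R => if (gList R K 0 : ℤ) ≤ j then (1 : ℝ) else 0)]
  apply Finset.sum_congr rfl
  intro π _
  rw [selList_length π K 0, one_pow]

end Stmt12aux

theorem stmt12 (K : List ℕ) (hne : K ≠ []) (hsort : K.Pairwise (· ≤ ·))
    (hpos : ∀ x ∈ K, 1 ≤ x) (m : ℕ) (hm : K.getLast hne + 1 ≤ m) :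
    Tle 1 m K ((K.length : ℤ) - 1) / (m.factorial : ℝ) =
      (1 / (m : ℝ)) *
        ∑ j ∈ Finset.range K.length,
          (K.reverse.getD j 0 : ℝ) * nestedSum (K.reverse.take j) m := by
  have hmg : K.getLast hne ≤ m := by omega
  have hmain := Stmt12aux.main_arith K.length K hne (le_refl _) hsort hpos m hmg
  rw [← Stmt12aux.Tle_eq m K ((K.length : ℤ) - 1)] at hmain
  rw [hmain]
  have hm1 : 1 ≤ m := le_trans (hpos _ (List.getLast_mem hne)) hmg
  have hfacn : m.factorial = m * (m - 1).factorial := by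
    conv_lhs => rw [show m = (m - 1) + 1 by omega]
    rw [Nat.factorial_succ, show m - 1 + 1 = m by omega]
  have hfac : (m.factorial : ℝ) = (m : ℝ) * (((m - 1).factorial : ℕ) : ℝ) := by
    rw [hfacn]; push_cast; ring
  rw [hfac]
  have heq : Stmt12aux.Fval K m
      = ∑ j ∈ Finset.range K.length, (K.reverse.getD j 0 : ℝ) * nestedSum (K.reverse.take j) m := rfl
  rw [← heq]
  have h1 : (((m - 1).factorial : ℕ) : ℝ) ≠ 0 := Nat.cast_ne_zero.mpr (Nat.factorial_ne_zero _)
  have h2 : (m : ℝ) ≠ 0 := by positivity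
  field_simp
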